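/- Let P be a finite set of points in the Euclidean plane with no three points collinear. Fix distinct points A, B ∈ P. Then the number of distinct values of the angle ∠ABC (with vertex B, one ray toward A), as C ranges over P \ {A, B}, is at least (|P| - 2) / 2. -/

import Mathlib

open EuclideanGeometry

local instance factFinrankE2 : Fact (Module.finrank ℝ (EuclideanSpace ℝ (Fin 2)) = 2) :=
  ⟨finrank_euclideanSpace_fin⟩

noncomputable local instance orientedE2 :
    Module.Oriented ℝ (EuclideanSpace ℝ (Fin 2)) (Fin 2) :=
  ⟨(EuclideanSpace.basisFun (Fin 2) ℝ).toBasis.orientation⟩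

theorem stmt_1 [DecidableEq (EuclideanSpace ℝ (Fin 2))]
    (P : Finset (EuclideanSpace ℝ (Fin 2)))
    (hgp : ∀ a ∈ P, ∀ b ∈ P, ∀ c ∈ P, a ≠ b → a ≠ c → b ≠ c →
      ¬ Collinear ℝ ({a, b, c} : Set (EuclideanSpace ℝ (Fin 2))))
    (A B : EuclideanSpace ℝ (Fin 2)) (hA : A ∈ P) (hB : B ∈ P) (hAB : A ≠ B) :
    ((P.card : ℝ) - 2) / 2 ≤
      (((P \ {A, B}).image (fun C => ∠ A B C)).card : ℝ) := by
  classical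
  set S : Finset (EuclideanSpace ℝ (Fin 2)) := P \ {A, B} with hS
  have hmem : ∀ C ∈ S, C ∈ P ∧ C ≠ A ∧ C ≠ B := by
    intro C hC
    simp only [hS, Finset.mem_sdiff, Finset.mem_insert, Finset.mem_singleton] at hC
    exact ⟨hC.1, fun h => hC.2 (Or.inl h), fun h => hC.2 (Or.inr h)⟩
  -- two points of S with the same oriented angle at B coincide
  have hinj : ∀ C₁ ∈ S, ∀ C₂ ∈ S, ∡ A B C₁ = ∡ A B C₂ → C₁ = C₂ := by
    intro C₁ h₁ C₂ h₂ h
    by_contra hne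
    obtain ⟨hP₁, hA₁, hB₁⟩ := hmem C₁ h₁
    obtain ⟨hP₂, hA₂, hB₂⟩ := hmem C₂ h₂
    have hz : ∡ C₁ B C₂ = 0 := by
      have hadd := oangle_add hB₁ hAB hB₂ (p := B)
      rw [oangle_rev A B C₁, h] at hadd
      rw [← hadd, neg_add_cancel]
    have hcol : Collinear ℝ ({C₁, B, C₂} : Set (EuclideanSpace ℝ (Fin 2))) :=
      oangle_eq_zero_or_eq_pi_iff_collinear.1 (Or.inl hz)
    exact hgp C₁ hP₁ B hB C₂ hP₂ hB₁ hne hB₂.symm hcol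
  -- each fiber of the unoriented angle has at most 2 elements
  have hfiber : ∀ a ∈ S.image (fun C => ∠ A B C),
      (S.filter (fun C => ∠ A B C = a)).card ≤ 2 := by
    intro a _
    by_contra hgt
    push_neg at hgt
    obtain ⟨C₁, C₂, C₃, hC₁, hC₂, hC₃, h12, h13, h23⟩ :=
      Finset.two_lt_card_iff.mp hgt
    simp only [Finset.mem_filter] at hC₁ hC₂ hC₃
    obtain ⟨hS₁, ha₁⟩ := hC₁
    obtain ⟨hS₂, ha₂⟩ := hC₂
    obtain ⟨hS₃, ha₃⟩ := hC₃
    obtain ⟨hP₁, hA₁, hB₁⟩ := hmem C₁ hS₁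
    obtain ⟨hP₂, hA₂, hB₂⟩ := hmem C₂ hS₂
    obtain ⟨hP₃, hA₃, hB₃⟩ := hmem C₃ hS₃
    have e₁ := oangle_eq_angle_or_eq_neg_angle hAB hB₁ (p := B)
    have e₂ := oangle_eq_angle_or_eq_neg_angle hAB hB₂ (p := B)
    have e₃ := oangle_eq_angle_or_eq_neg_angle hAB hB₃ (p := B)
    rw [ha₁] at e₁; rw [ha₂] at e₂; rw [ha₃] at e₃
    rcases e₁ with h1 | h1 <;> rcases e₂ with h2 | h2 <;> rcases e₃ with h3 | h3
    · exact h12 (hinj C₁ hS₁ C₂ hS₂ (by rw [h1, h2]))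
    · exact h12 (hinj C₁ hS₁ C₂ hS₂ (by rw [h1, h2]))
    · exact h13 (hinj C₁ hS₁ C₃ hS₃ (by rw [h1, h3]))
    · exact h23 (hinj C₂ hS₂ C₃ hS₃ (by rw [h2, h3]))
    · exact h23 (hinj C₂ hS₂ C₃ hS₃ (by rw [h2, h3]))
    · exact h13 (hinj C₁ hS₁ C₃ hS₃ (by rw [h1, h3]))
    · exact h12 (hinj C₁ hS₁ C₂ hS₂ (by rw [h1, h2]))
    · exact h12 (hinj C₁ hS₁ C₂ hS₂ (by rw [h1, h2]))
  have hcount : S.card ≤ 2 * (S.image (fun C => ∠ A B C)).card :=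
    Finset.card_le_mul_card_image _ 2 hfiber
  have hsub : ({A, B} : Finset (EuclideanSpace ℝ (Fin 2))) ⊆ P := by
    intro x hx
    simp only [Finset.mem_insert, Finset.mem_singleton] at hx
    rcases hx with rfl | rfl <;> assumption
  have hpair : ({A, B} : Finset (EuclideanSpace ℝ (Fin 2))).card = 2 :=
    Finset.card_pair hAB
  have hScard : S.card = P.card - 2 := by
    rw [hS, Finset.card_sdiff_of_subset hsub, hpair]
  have h2le : 2 ≤ P.card := by have := Finset.card_le_card hsub; omega
  have hcast : (S.card : ℝ) = (P.card : ℝ) - 2 := by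
    rw [hScard, Nat.cast_sub h2le]; norm_num
  rw [div_le_iff₀ (by norm_num : (0:ℝ) < 2)]
  have := (Nat.cast_le (α := ℝ)).2 hcount
  push_cast at this
  linarith
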